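/- The number of matrices A ∈ SL₃(ℤ) satisfying Q(A·v) = Q(v) for all v ∈ ℤ³ equals 8 when Q(x,y,z) = x²+y²+10z², and equals 4 when Q(x,y,z) = 2x²+2y²+3z²−2xz. -/
import Mathlib


/-- The ternary quadratic form `x² + y² + 10z²` over `ℤ`. -/
def QA (v : Fin 3 → ℤ) : ℤ := v 0 ^ 2 + v 1 ^ 2 + 10 * v 2 ^ 2

/-- The ternary quadratic form `2x² + 2y² + 3z² - 2xz` over `ℤ`. -/
def QB (v : Fin 3 → ℤ) : ℤ := 2 * v 0 ^ 2 + 2 * v 1 ^ 2 + 3 * v 2 ^ 2 - 2 * v 0 * v 2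

lemma LA1 (x y z : ℤ) (h : x^2+y^2+10*z^2 = 1) :
    (x=1∧y=0∧z=0)∨(x=-1∧y=0∧z=0)∨(x=0∧y=1∧z=0)∨(x=0∧y=-1∧z=0) := by
  have hz1 : -1 ≤ z := by nlinarith [sq_nonneg x, sq_nonneg y]
  have hz2 : z ≤ 1 := by nlinarith [sq_nonneg x, sq_nonneg y]
  have hx1 : -1 ≤ x := by nlinarith [sq_nonneg y, sq_nonneg z, sq_nonneg (x+1)]
  have hx2 : x ≤ 1 := by nlinarith [sq_nonneg y, sq_nonneg z, sq_nonneg (x-1)]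
  have hy1 : -1 ≤ y := by nlinarith [sq_nonneg x, sq_nonneg z, sq_nonneg (y+1)]
  have hy2 : y ≤ 1 := by nlinarith [sq_nonneg x, sq_nonneg z, sq_nonneg (y-1)]
  interval_cases x <;> interval_cases y <;> interval_cases z <;> omega

set_option maxHeartbeats 1000000 in
lemma LA10 (x y z : ℤ) (h : x^2+y^2+10*z^2 = 10) :
    (x=0∧y=0∧z=1)∨(x=0∧y=0∧z=-1)∨
    (x=1∧y=3∧z=0)∨(x=1∧y=-3∧z=0)∨(x=-1∧y=3∧z=0)∨(x=-1∧y=-3∧z=0)∨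
    (x=3∧y=1∧z=0)∨(x=3∧y=-1∧z=0)∨(x=-3∧y=1∧z=0)∨(x=-3∧y=-1∧z=0) := by
  have hzz : z^2 ≤ 1 := by nlinarith [sq_nonneg x, sq_nonneg y]
  have hz : z = -1 ∨ z = 0 ∨ z = 1 := by
    have h1 : -1 ≤ z := by nlinarith [sq_nonneg (z+1)]
    have h2 : z ≤ 1 := by nlinarith [sq_nonneg (z-1)]
    omega
  clear hzz
  rcases hz with rfl | rfl | rfl
  · have hx : x = 0 := by nlinarith [sq_nonneg x, sq_nonneg y]
    have hy : y = 0 := by nlinarith [sq_nonneg x, sq_nonneg y]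
    tauto
  · have h' : x^2 + y^2 = 10 := by linarith
    clear h
    have hx1 : -3 ≤ x := by nlinarith [sq_nonneg y, sq_nonneg (x+3)]
    have hx2 : x ≤ 3 := by nlinarith [sq_nonneg y, sq_nonneg (x-3)]
    have hy1 : -3 ≤ y := by nlinarith [sq_nonneg x, sq_nonneg (y+3)]
    have hy2 : y ≤ 3 := by nlinarith [sq_nonneg x, sq_nonneg (y-3)]
    interval_cases x <;> interval_cases y <;> omega
  · have hx : x = 0 := by nlinarith [sq_nonneg x, sq_nonneg y]
    have hy : y = 0 := by nlinarith [sq_nonneg x, sq_nonneg y]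
    tauto

set_option maxHeartbeats 1000000 in
lemma LB2 (x y z : ℤ) (h : 2*x^2+2*y^2+3*z^2-2*x*z = 2) :
    (x=1∧y=0∧z=0)∨(x=-1∧y=0∧z=0)∨(x=0∧y=1∧z=0)∨(x=0∧y=-1∧z=0) := by
  have hz1 : -1 ≤ z := by nlinarith [sq_nonneg x, sq_nonneg y, sq_nonneg (x-z)]
  have hz2 : z ≤ 1 := by nlinarith [sq_nonneg x, sq_nonneg y, sq_nonneg (x-z)]
  have hx1 : -1 ≤ x := by nlinarith [sq_nonneg y, sq_nonneg z, sq_nonneg (x-z), sq_nonneg (x+1)]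
  have hx2 : x ≤ 1 := by nlinarith [sq_nonneg y, sq_nonneg z, sq_nonneg (x-z), sq_nonneg (x-1)]
  have hy1 : -1 ≤ y := by nlinarith [sq_nonneg x, sq_nonneg z, sq_nonneg (x-z)]
  have hy2 : y ≤ 1 := by nlinarith [sq_nonneg x, sq_nonneg z, sq_nonneg (x-z)]
  interval_cases x <;> interval_cases y <;> interval_cases z <;> omega

set_option maxHeartbeats 1000000 in
lemma LB3 (x y z : ℤ) (h : 2*x^2+2*y^2+3*z^2-2*x*z = 3) :
    (x=0∧y=0∧z=1)∨(x=0∧y=0∧z=-1)∨(x=1∧y=0∧z=1)∨(x=-1∧y=0∧z=-1) := by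
  have hz1 : -1 ≤ z := by nlinarith [sq_nonneg x, sq_nonneg y, sq_nonneg (x-z)]
  have hz2 : z ≤ 1 := by nlinarith [sq_nonneg x, sq_nonneg y, sq_nonneg (x-z)]
  have hx1 : -1 ≤ x := by nlinarith [sq_nonneg y, sq_nonneg z, sq_nonneg (x-z), sq_nonneg (x+1)]
  have hx2 : x ≤ 1 := by nlinarith [sq_nonneg y, sq_nonneg z, sq_nonneg (x-z), sq_nonneg (x-1)]
  have hy1 : -1 ≤ y := by nlinarith [sq_nonneg x, sq_nonneg z, sq_nonneg (x-z)]
  have hy2 : y ≤ 1 := by nlinarith [sq_nonneg x, sq_nonneg z, sq_nonneg (x-z)]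
  interval_cases x <;> interval_cases y <;> interval_cases z <;> omega

/-- The eight proper automorphs of `x²+y²+10z²`. -/
def sA : Finset (Matrix (Fin 3) (Fin 3) ℤ) :=
  { !![1,0,0;0,1,0;0,0,1], !![1,0,0;0,-1,0;0,0,-1], !![-1,0,0;0,1,0;0,0,-1],
    !![-1,0,0;0,-1,0;0,0,1], !![0,1,0;1,0,0;0,0,-1], !![0,-1,0;-1,0,0;0,0,-1],
    !![0,1,0;-1,0,0;0,0,1], !![0,-1,0;1,0,0;0,0,1] }

/-- The four proper automorphs of `2x²+2y²+3z²-2xz`. -/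
def sB : Finset (Matrix (Fin 3) (Fin 3) ℤ) :=
  { !![1,0,0;0,1,0;0,0,1], !![1,0,-1;0,-1,0;0,0,-1], !![-1,0,0;0,1,0;0,0,-1],
    !![-1,0,1;0,-1,0;0,0,1] }

lemma cardAux {p : Matrix (Fin 3) (Fin 3) ℤ → Prop} (s : Finset (Matrix (Fin 3) (Fin 3) ℤ))
    (h : ∀ A, p A ↔ A ∈ s) : Nat.card {A : Matrix (Fin 3) (Fin 3) ℤ // p A} = s.card := by
  rw [Nat.card_congr (Equiv.subtypeEquivRight h), Nat.card_eq_fintype_card, Fintype.card_coe]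

set_option maxHeartbeats 4000000 in
lemma keyA (A : Matrix (Fin 3) (Fin 3) ℤ) :
    (A.det = 1 ∧ ∀ v : Fin 3 → ℤ, QA (A.mulVec v) = QA v) ↔ A ∈ sA := by
  constructor
  · rintro ⟨hdet, h⟩
    obtain ⟨a,b,c,d,e,f,g,i,j,rfl⟩ : ∃ a b c d e f g i j, A = !![a,b,c;d,e,f;g,i,j] :=
      ⟨_,_,_,_,_,_,_,_,_, Matrix.etaExpand_eq A |>.symm⟩
    rw [Matrix.det_fin_three] at hdet
    simp only [Matrix.cons_val', Matrix.cons_val_zero, Matrix.cons_val_one, Matrix.head_cons,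
      Matrix.empty_val', Matrix.cons_val_fin_one, Matrix.head_fin_const, Matrix.cons_val_two,
      Matrix.tail_cons, Matrix.of_apply] at hdet
    have h1 := h ![1,0,0]
    have h2 := h ![0,1,0]
    have h3 := h ![0,0,1]
    have h12 := h ![1,1,0]
    have h13 := h ![1,0,1]
    have h23 := h ![0,1,1]
    simp [QA, Matrix.mulVec, dotProduct, Fin.sum_univ_three] at h1 h2 h3 h12 h13 h23
    clear h
    rcases LA1 a d g h1 with ⟨rfl,rfl,rfl⟩|⟨rfl,rfl,rfl⟩|⟨rfl,rfl,rfl⟩|⟨rfl,rfl,rfl⟩ <;>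
    rcases LA1 b e i h2 with ⟨rfl,rfl,rfl⟩|⟨rfl,rfl,rfl⟩|⟨rfl,rfl,rfl⟩|⟨rfl,rfl,rfl⟩ <;>
    rcases LA10 c f j h3 with ⟨rfl,rfl,rfl⟩|⟨rfl,rfl,rfl⟩|⟨rfl,rfl,rfl⟩|⟨rfl,rfl,rfl⟩|⟨rfl,rfl,rfl⟩|⟨rfl,rfl,rfl⟩|⟨rfl,rfl,rfl⟩|⟨rfl,rfl,rfl⟩|⟨rfl,rfl,rfl⟩|⟨rfl,rfl,rfl⟩ <;>
    first
      | (exfalso; omega)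
      | decide
  · intro hm
    fin_cases hm <;>
      refine ⟨by simp [Matrix.det_fin_three, Matrix.vecHead, Matrix.vecTail], fun v => ?_⟩ <;>
      · simp [QA, Matrix.mulVec, dotProduct, Fin.sum_univ_three]
        try ring

set_option maxHeartbeats 4000000 in
lemma keyB (A : Matrix (Fin 3) (Fin 3) ℤ) :
    (A.det = 1 ∧ ∀ v : Fin 3 → ℤ, QB (A.mulVec v) = QB v) ↔ A ∈ sB := by
  constructor
  · rintro ⟨hdet, h⟩
    obtain ⟨a,b,c,d,e,f,g,i,j,rfl⟩ : ∃ a b c d e f g i j, A = !![a,b,c;d,e,f;g,i,j] :=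
      ⟨_,_,_,_,_,_,_,_,_, Matrix.etaExpand_eq A |>.symm⟩
    rw [Matrix.det_fin_three] at hdet
    simp only [Matrix.cons_val', Matrix.cons_val_zero, Matrix.cons_val_one, Matrix.head_cons,
      Matrix.empty_val', Matrix.cons_val_fin_one, Matrix.head_fin_const, Matrix.cons_val_two,
      Matrix.tail_cons, Matrix.of_apply] at hdet
    have h1 := h ![1,0,0]
    have h2 := h ![0,1,0]
    have h3 := h ![0,0,1]
    have h12 := h ![1,1,0]
    have h13 := h ![1,0,1]
    have h23 := h ![0,1,1]
    simp [QB, Matrix.mulVec, dotProduct, Fin.sum_univ_three] at h1 h2 h3 h12 h13 h23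
    clear h
    rcases LB2 a d g h1 with ⟨rfl,rfl,rfl⟩|⟨rfl,rfl,rfl⟩|⟨rfl,rfl,rfl⟩|⟨rfl,rfl,rfl⟩ <;>
    rcases LB2 b e i h2 with ⟨rfl,rfl,rfl⟩|⟨rfl,rfl,rfl⟩|⟨rfl,rfl,rfl⟩|⟨rfl,rfl,rfl⟩ <;>
    rcases LB3 c f j h3 with ⟨rfl,rfl,rfl⟩|⟨rfl,rfl,rfl⟩|⟨rfl,rfl,rfl⟩|⟨rfl,rfl,rfl⟩ <;>
    first
      | (exfalso; omega)
      | decide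
  · intro hm
    fin_cases hm <;>
      refine ⟨by simp [Matrix.det_fin_three, Matrix.vecHead, Matrix.vecTail], fun v => ?_⟩ <;>
      · simp [QB, Matrix.mulVec, dotProduct, Fin.sum_univ_three]
        try ring

/-- The form `x²+y²+10z²` has exactly `8` proper automorphs in `SL₃(ℤ)`, while
`2x²+2y²+3z²-2xz` has exactly `4`. -/
theorem stmt_11 :
    Nat.card {A : Matrix (Fin 3) (Fin 3) ℤ //
        A.det = 1 ∧ ∀ v : Fin 3 → ℤ, QA (A.mulVec v) = QA v} = 8 ∧
    Nat.card {A : Matrix (Fin 3) (Fin 3) ℤ //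
        A.det = 1 ∧ ∀ v : Fin 3 → ℤ, QB (A.mulVec v) = QB v} = 4 := by
  constructor
  · rw [cardAux sA keyA]; decide
  · rw [cardAux sB keyB]; decide
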